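/- Let Γ and Λ be countable groups with pmp actions on probability spaces (X, μ) and (Y, ν) respectively, and let θ : X → Y be a measure-preserving measurable map such that for every g ∈ Γ, for μ-almost every x ∈ X, θ(g·x) ∈ Λ·θ(x). Let (B_n) be measurable subsets of Y such that for every s ∈ Λ, lim_n ν(⋃_{k ≥ n} (s·B_k Δ B_k)) = 0. Then the sets A_n := θ⁻¹(B_n) satisfy, for every g ∈ Γ, lim_n μ(⋃_{k ≥ n} (g·A_k Δ A_k)) = 0. -/

import Mathlib

open MeasureTheory Filter
open scoped Pointwise

/-- Strengthened lifting of almost invariant sequences through a factor map: if `θ : X → Y`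
is measure preserving and maps `Γ`-orbits into `Λ`-orbits a.e., and `(B n)` are measurable
sets with `ν (⋃_{k ≥ n} s • B k ∆ B k) → 0` for all `s ∈ Λ`, then `A n := θ⁻¹ (B n)`
satisfies `μ (⋃_{k ≥ n} g • A k ∆ A k) → 0` for every `g ∈ Γ`. -/
theorem stmt_5 {Γ Λ X Y : Type*} [Group Γ] [Countable Γ] [Group Λ] [Countable Λ]
    [MeasurableSpace X] [MeasurableSpace Y] [MulAction Γ X] [MulAction Λ Y]
    (μ : Measure X) (ν : Measure Y) [IsProbabilityMeasure μ] [IsProbabilityMeasure ν]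
    (hΓ : ∀ g : Γ, MeasurePreserving (fun x => g • x) μ μ)
    (hΛ : ∀ s : Λ, MeasurePreserving (fun y => s • y) ν ν)
    (θ : X → Y) (hθ : MeasurePreserving θ μ ν)
    (hfac : ∀ g : Γ, ∀ᵐ x ∂μ, ∃ s : Λ, θ (g • x) = s • θ x)
    (B : ℕ → Set Y) (hB : ∀ n, MeasurableSet (B n))
    (hai : ∀ s : Λ,
      Tendsto (fun n => ν (⋃ k ∈ Set.Ici n, symmDiff (s • B k) (B k))) atTop (nhds 0)) :
    ∀ g : Γ, Tendsto
      (fun n => μ (⋃ k ∈ Set.Ici n, symmDiff (g • (θ ⁻¹' B k)) (θ ⁻¹' B k)))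
      atTop (nhds 0) := by
  intro g
  -- notation
  set A : ℕ → Set X := fun k => θ ⁻¹' B k with hA
  set D : ℕ → Set X := fun n => ⋃ k ∈ Set.Ici n, symmDiff (g • A k) (A k) with hD
  set C : Λ → ℕ → Set Y := fun s n => ⋃ k ∈ Set.Ici n, symmDiff (s⁻¹ • B k) (B k) with hC
  -- measurability of smul images
  have hsmulΛ : ∀ (s : Λ) (k : ℕ), MeasurableSet (s • B k) := by
    intro s k
    have : s • B k = (fun y => s⁻¹ • y) ⁻¹' (B k) := by
      ext y
      simp [Set.mem_smul_set_iff_inv_smul_mem]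
    rw [this]
    exact (hΛ s⁻¹).measurable (hB k)
  have hAmeas : ∀ k, MeasurableSet (A k) := fun k => hθ.measurable (hB k)
  have hgA : ∀ k, MeasurableSet (g • A k) := by
    intro k
    have : g • A k = (fun x => g⁻¹ • x) ⁻¹' (A k) := by
      ext x
      simp [Set.mem_smul_set_iff_inv_smul_mem]
    rw [this]
    exact (hΓ g⁻¹).measurable (hAmeas k)
  have hDmeas : ∀ n, MeasurableSet (D n) := by
    intro n
    exact MeasurableSet.biUnion (Set.to_countable _)
      fun k _ => ((hgA k).symmDiff (hAmeas k))
  have hCmeas : ∀ (s : Λ) (n : ℕ), MeasurableSet (C s n) := by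
    intro s n
    exact MeasurableSet.biUnion (Set.to_countable _)
      fun k _ => ((hsmulΛ s⁻¹ k).symmDiff (hB k))
  -- ν (C s n) → 0
  have hCtend : ∀ s : Λ, Tendsto (fun n => ν (C s n)) atTop (nhds 0) := fun s => hai s⁻¹
  -- key pointwise fact
  have hkey : ∀ (s : Λ) (x : X), θ (g⁻¹ • x) = s • θ x → ∀ n, x ∈ D n → θ x ∈ C s n := by
    intro s x hx n hxD
    rcases Set.mem_iUnion₂.1 hxD with ⟨k, hk, hxk⟩
    refine Set.mem_iUnion₂.2 ⟨k, hk, ?_⟩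
    have h1 : x ∈ g • A k ↔ θ x ∈ s⁻¹ • B k := by
      rw [Set.mem_smul_set_iff_inv_smul_mem, Set.mem_smul_set_iff_inv_smul_mem]
      simp only [inv_inv]
      change θ (g⁻¹ • x) ∈ B k ↔ s • θ x ∈ B k
      rw [hx]
    have h2 : x ∈ A k ↔ θ x ∈ B k := Iff.rfl
    rw [Set.mem_symmDiff] at hxk ⊢
    tauto
  -- enumeration of Λ
  obtain ⟨e, he⟩ := exists_surjective_nat Λ
  -- the increasing approximating sets
  set U : ℕ → Set X := fun m => {x | ∃ k ≤ m, θ (g⁻¹ • x) = e k • θ x} with hU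
  have hUmono : Monotone U := by
    intro a b hab x hx
    rcases hx with ⟨k, hk, hkx⟩
    exact ⟨k, hk.trans hab, hkx⟩
  have hUunion : μ (⋃ m, U m) = 1 := by
    have hsub : {x : X | ∃ s : Λ, θ (g⁻¹ • x) = s • θ x} ⊆ ⋃ m, U m := by
      intro x ⟨s, hs⟩
      rcases he s with ⟨k, rfl⟩
      exact Set.mem_iUnion.2 ⟨k, k, le_rfl, hs⟩
    have hnull : μ (⋃ m, U m)ᶜ = 0 := by
      refine measure_mono_null ?_ (ae_iff.1 (hfac g⁻¹))
      intro x hx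
      exact fun h => hx (hsub h)
    have := measure_union_le (μ := μ) (⋃ m, U m) (⋃ m, U m)ᶜ
    rw [Set.union_compl_self, hnull, add_zero, measure_univ] at this
    exact le_antisymm (measure_mono (Set.subset_univ _) |>.trans (by simp)) this
  -- continuity from below
  have hUtend : Tendsto (fun m => μ (U m)) atTop (nhds 1) := by
    have := tendsto_measure_iUnion_atTop (μ := μ) hUmono
    rwa [hUunion] at this
  -- main estimate via ε
  rw [ENNReal.tendsto_atTop_zero]
  intro ε hε
  set ε' : ENNReal := ε / 2 with hε'def
  have hε' : 0 < ε' := ENNReal.half_pos (ne_of_gt hε)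
  have hε'top : ε' ≠ ⊤ ∨ True := Or.inr trivial
  -- choose m with 1 ≤ μ (U m) + ε'
  have hm : ∃ m, 1 ≤ μ (U m) + ε' := by
    rcases le_or_gt 1 ε' with h | h
    · exact ⟨0, le_add_of_nonneg_left zero_le |>.trans (add_le_add_right h _) |>.trans
        (by rw [add_comm])⟩
    · have h1 : (1 : ENNReal) - ε' < 1 :=
        ENNReal.sub_lt_self ENNReal.one_ne_top one_ne_zero (ne_of_gt hε')
      have := hUtend.eventually (eventually_gt_nhds h1)
      rcases this.exists with ⟨m, hm⟩
      exact ⟨m, by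
        have := hm.le
        rwa [tsub_le_iff_right] at this⟩
  rcases hm with ⟨m, hm⟩
  -- finite sum of ν (C (e k) n) tends to 0
  have hsum : Tendsto (fun n => ∑ k ∈ Finset.range (m + 1), ν (C (e k) n)) atTop (nhds 0) := by
    have := tendsto_finset_sum (Finset.range (m + 1))
      (fun k _ => hCtend (e k))
    simpa using this
  rcases ENNReal.tendsto_atTop_zero.1 hsum ε' hε' with ⟨N, hN⟩
  refine ⟨N, fun n hn => ?_⟩
  -- set V n
  set V : Set X := ⋃ k ∈ Finset.range (m + 1), θ ⁻¹' (C (e k) n) with hV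
  have hVle : μ V ≤ ε' := by
    calc μ V ≤ ∑ k ∈ Finset.range (m + 1), μ (θ ⁻¹' (C (e k) n)) :=
          measure_biUnion_finset_le _ _
      _ = ∑ k ∈ Finset.range (m + 1), ν (C (e k) n) := by
          refine Finset.sum_congr rfl fun k _ => ?_
          exact hθ.measure_preimage (hCmeas (e k) n).nullMeasurableSet
      _ ≤ ε' := hN n hn
  -- U m \ V ⊆ (D n)ᶜ
  have hsubc : U m \ V ⊆ (D n)ᶜ := by
    rintro x ⟨⟨k, hk, hkx⟩, hxV⟩ hxD
    refine hxV ?_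
    exact Set.mem_biUnion (Finset.mem_range.mpr (Nat.lt_succ_of_le hk))
      (hkey (e k) x hkx n hxD)
  -- μ (U m) ≤ μ V + μ (D n)ᶜ
  have h3 : μ (U m) ≤ μ V + μ (D n)ᶜ := by
    calc μ (U m) ≤ μ (V ∪ (U m \ V)) := measure_mono (by intro x hx; by_cases h : x ∈ V <;> simp [h, hx])
      _ ≤ μ V + μ (U m \ V) := measure_union_le _ _
      _ ≤ μ V + μ (D n)ᶜ := add_le_add_right (measure_mono hsubc) _
  -- combine
  have hcompl : μ (D n) + μ (D n)ᶜ = 1 := by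
    rw [measure_add_measure_compl (hDmeas n), measure_univ]
  have hmain : μ (D n) + 1 ≤ 1 + (μ V + ε') := by
    calc μ (D n) + 1 ≤ μ (D n) + (μ (U m) + ε') := add_le_add_right hm _
      _ ≤ μ (D n) + (μ V + μ (D n)ᶜ + ε') := add_le_add_right (add_le_add_left h3 _) _
      _ = (μ (D n) + μ (D n)ᶜ) + (μ V + ε') := by ring
      _ = 1 + (μ V + ε') := by rw [hcompl]
  have hDn : μ (D n) ≤ μ V + ε' := by
    have h1 : (1 : ENNReal) + μ (D n) ≤ 1 + (μ V + ε') := by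
      rw [add_comm]; exact hmain
    exact (ENNReal.add_le_add_iff_left ENNReal.one_ne_top).1 h1
  calc μ (D n) ≤ μ V + ε' := hDn
    _ ≤ ε' + ε' := add_le_add_left hVle _
    _ = ε := ENNReal.add_halves ε
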